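/- Let r, b, p, q be natural numbers, let B be an r×b matrix of full row rank r (i.e. rank B = r), C an r×q matrix, D a p×b matrix, and E a p×q matrix over 𝔽₂, and suppose there exists a p×r matrix Y over 𝔽₂ with D = Y·B. Then rank [[B, C],[D, E]] = r + rank(E + Y·C). -/

import Mathlib

open Matrix LinearMap Module

/-- Equivalence between `p.prod q` and `p × q`. -/
def prodSubEquiv {K M M' : Type*} [Semiring K] [AddCommMonoid M] [AddCommMonoid M']
    [Module K M] [Module K M'] (p : Submodule K M) (q : Submodule K M') :
    (p.prod q) ≃ₗ[K] p × q where
  toFun x := (⟨x.val.1, x.prop.1⟩, ⟨x.val.2, x.prop.2⟩)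
  invFun y := ⟨(y.1.val, y.2.val), ⟨y.1.prop, y.2.prop⟩⟩
  map_add' _ _ := rfl
  map_smul' _ _ := rfl
  left_inv _ := rfl
  right_inv _ := rfl

lemma range_prodMap' {K M M' N N' : Type*} [Semiring K] [AddCommMonoid M] [AddCommMonoid M']
    [AddCommMonoid N] [AddCommMonoid N'] [Module K M] [Module K M'] [Module K N] [Module K N']
    (f : M →ₗ[K] N) (g : M' →ₗ[K] N') :
    LinearMap.range (f.prodMap g) = (LinearMap.range f).prod (LinearMap.range g) := by
  ext ⟨a, b⟩
  simp only [LinearMap.mem_range, Submodule.mem_prod, Prod.ext_iff]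
  constructor
  · rintro ⟨⟨x, y⟩, hx, hy⟩
    exact ⟨⟨x, hx⟩, ⟨y, hy⟩⟩
  · rintro ⟨⟨x, hx⟩, ⟨y, hy⟩⟩
    exact ⟨(x, y), hx, hy⟩

lemma rank_fromBlocks_diag {K : Type*} [Field K] {m n m' n' : Type*}
    [Fintype m] [Fintype n] [Fintype m'] [Fintype n'] [DecidableEq n] [DecidableEq n']
    (A : Matrix m n K) (D : Matrix m' n' K) :
    (Matrix.fromBlocks A 0 0 D).rank = A.rank + D.rank := by
  classical
  let e₁ := LinearEquiv.sumArrowLequivProdArrow n n' K K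
  let e₂ := LinearEquiv.sumArrowLequivProdArrow m m' K K
  have key : (Matrix.fromBlocks A 0 0 D).mulVecLin =
      (e₂.symm : (m → K) × (m' → K) →ₗ[K] (m ⊕ m' → K)) ∘ₗ
        ((A.mulVecLin.prodMap D.mulVecLin) ∘ₗ
          (e₁ : (n ⊕ n' → K) →ₗ[K] (n → K) × (n' → K))) := by
    apply LinearMap.ext; intro x
    funext i
    cases i <;>
      simp [Matrix.mulVecLin_apply, Matrix.fromBlocks_mulVec, e₁, e₂,
        LinearEquiv.sumArrowLequivProdArrow, Equiv.sumArrowEquivProdArrow]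
  rw [Matrix.rank, key, LinearMap.range_comp, LinearMap.range_comp_of_range_eq_top _
    (LinearMap.range_eq_top.mpr e₁.surjective), range_prodMap',
    LinearEquiv.finrank_map_eq,
    (prodSubEquiv (LinearMap.range A.mulVecLin) (LinearMap.range D.mulVecLin)).finrank_eq,
    Module.finrank_prod, Matrix.rank, Matrix.rank]

theorem stmt_1 (r b p q : ℕ)
    (B : Matrix (Fin r) (Fin b) (ZMod 2)) (C : Matrix (Fin r) (Fin q) (ZMod 2))
    (D : Matrix (Fin p) (Fin b) (ZMod 2)) (E : Matrix (Fin p) (Fin q) (ZMod 2))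
    (hB : B.rank = r)
    (Y : Matrix (Fin p) (Fin r) (ZMod 2)) (hY : D = Y * B) :
    (Matrix.fromBlocks B C D E).rank = r + (E + Y * C).rank := by
  classical
  -- B has a right inverse
  have hrange : LinearMap.range B.mulVecLin = ⊤ := by
    apply Submodule.eq_top_of_finrank_eq
    rw [← Matrix.rank, hB, finrank_fintype_fun_eq_card, Fintype.card_fin]
  have htoLin : LinearMap.range (Matrix.toLin' B) = ⊤ := hrange
  obtain ⟨g, hg⟩ := (Matrix.toLin' B).exists_rightInverse_of_surjective htoLin
  set B' := LinearMap.toMatrix' g with hB'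
  have hBB' : B * B' = 1 := by
    rw [hB', ← LinearMap.toMatrix'_toLin' B, ← LinearMap.toMatrix'_comp, hg,
      LinearMap.toMatrix'_id]
  set F := E + Y * C with hF
  -- left multiply by [[1,0],[Y,1]]
  have h3 : Y * B + (1 : Matrix (Fin p) (Fin p) (ZMod 2)) * D = 0 := by
    rw [Matrix.one_mul, hY]
    ext i j
    exact CharTwo.add_self_eq_zero _
  have h4 : Y * C + (1 : Matrix (Fin p) (Fin p) (ZMod 2)) * E = F := by
    rw [Matrix.one_mul, hF, add_comm]
  have hL : (Matrix.fromBlocks (1 : Matrix (Fin r) (Fin r) (ZMod 2)) 0 Y 1) *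
      (Matrix.fromBlocks B C D E) = Matrix.fromBlocks B C 0 F := by
    exact (Matrix.fromBlocks_multiply _ _ _ _ _ _ _ _).trans (by rw [h3, h4]; simp)
  have h5 : B * (B' * C) + C * (1 : Matrix (Fin q) (Fin q) (ZMod 2)) = 0 := by
    rw [Matrix.mul_one, ← Matrix.mul_assoc, hBB', Matrix.one_mul]
    ext i j
    exact CharTwo.add_self_eq_zero _
  have hR : (Matrix.fromBlocks B C (0 : Matrix (Fin p) (Fin b) (ZMod 2)) F) *
      (Matrix.fromBlocks 1 (B' * C) 0 1) = Matrix.fromBlocks B 0 0 F := by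
    exact (Matrix.fromBlocks_multiply _ _ _ _ _ _ _ _).trans (by rw [h5]; simp)
  have hdetL : IsUnit (Matrix.fromBlocks (1 : Matrix (Fin r) (Fin r) (ZMod 2)) 0 Y 1).det := by
    rw [Matrix.det_fromBlocks_zero₁₂]
    simp
  have hdetR : IsUnit (Matrix.fromBlocks (1 : Matrix (Fin b) (Fin b) (ZMod 2)) (B' * C) 0 1).det := by
    rw [Matrix.det_fromBlocks_zero₂₁]
    simp
  calc (Matrix.fromBlocks B C D E).rank
      = ((Matrix.fromBlocks (1 : Matrix (Fin r) (Fin r) (ZMod 2)) 0 Y 1) *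
          (Matrix.fromBlocks B C D E)).rank :=
        (Matrix.rank_mul_eq_right_of_isUnit_det _ _ hdetL).symm
    _ = (Matrix.fromBlocks B C (0 : Matrix (Fin p) (Fin b) (ZMod 2)) F).rank := congrArg Matrix.rank hL
    _ = ((Matrix.fromBlocks B C (0 : Matrix (Fin p) (Fin b) (ZMod 2)) F) *
          (Matrix.fromBlocks 1 (B' * C) 0 1)).rank :=
        (Matrix.rank_mul_eq_left_of_isUnit_det _ _ hdetR).symm
    _ = (Matrix.fromBlocks B 0 0 F).rank := congrArg Matrix.rank hR
    _ = B.rank + F.rank := rank_fromBlocks_diag B F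
    _ = r + F.rank := by rw [hB]
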